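/- 1 - J_P is a metric on the space of probability distributions with full support on a finite set: it is symmetric, vanishes exactly when x = y, and satisfies the triangle inequality 1 - J_P(x,y) ≤ (1 - J_P(x,z)) + (1 - J_P(z,y)). -/

import Mathlib

open Finset

open Classical in
/-- The probability Jaccard similarity of two nonnegative vectors. -/
noncomputable def JP {ι : Type*} [Fintype ι] (x y : ι → ℝ) : ℝ :=
  ∑ i ∈ Finset.univ.filter (fun i => 0 < x i ∧ 0 < y i),
    (∑ j, max (x j / x i) (y j / y i))⁻¹

namespace JPAux

open MeasureTheory ProbabilityTheory Real Set
open scoped ENNReal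

/-- The exponential measure with rate 1. -/
noncomputable def em : Measure ℝ := expMeasure 1

instance : IsProbabilityMeasure em := isProbabilityMeasure_expMeasure one_pos

lemma em_def : em = volume.withDensity (exponentialPDF 1) := rfl

lemma em_null {s : Set ℝ} (hs : volume s = 0) : em s = 0 :=
  (withDensity_absolutelyContinuous _ _) hs

lemma em_Iic (b : ℝ) : em (Iic b) = ENNReal.ofReal (if 0 ≤ b then 1 - exp (-b) else 0) := by
  rw [em_def, withDensity_apply _ measurableSet_Iic]
  simpa using lintegral_exponentialPDF_eq_antiDeriv one_pos b

lemma em_Iio (b : ℝ) : em (Iio b) = ENNReal.ofReal (if 0 ≤ b then 1 - exp (-b) else 0) := by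
  rw [← em_Iic]
  refine le_antisymm (measure_mono Iio_subset_Iic_self) ?_
  rw [← Iio_union_right]
  refine (measure_union_le _ _).trans ?_
  simp [em_null (volume_singleton (a := b))]

lemma em_Ici {b : ℝ} (hb : 0 ≤ b) : em (Ici b) = ENNReal.ofReal (exp (-b)) := by
  have h : em (Set.Iio b)ᶜ = em Set.univ - em (Set.Iio b) :=
    measure_compl measurableSet_Iio (measure_ne_top _ _)
  rw [compl_Iio] at h
  rw [h, measure_univ, em_Iio, if_pos hb]
  have h1 : (1 : ℝ≥0∞) = ENNReal.ofReal 1 := by simp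
  have h2 : (0:ℝ) ≤ 1 - exp (-b) := by
    have := exp_le_one_iff.2 (show -b ≤ 0 by linarith)
    linarith
  rw [h1, ← ENNReal.ofReal_sub _ h2]
  norm_num

lemma em_ae_nonneg : ∀ᵐ a ∂em, 0 ≤ a := by
  rw [MeasureTheory.ae_iff]
  have : {a : ℝ | ¬ 0 ≤ a} = Set.Iio 0 := by ext a; simp
  rw [this, em_Iio]
  simp

/-- product of exponential measures -/
noncomputable def pim (m : ℕ) : Measure (Fin m → ℝ) := Measure.pi fun _ => em

instance (m : ℕ) : IsProbabilityMeasure (pim m) := by unfold pim; infer_instance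

/-- The "index `i` wins for rates `c`" set. -/
def K {m : ℕ} (c : Fin m → ℝ) (i : Fin m) : Set (Fin m → ℝ) := {t | ∀ j, c j * t i ≤ t j}

lemma measurableSet_K {m : ℕ} (c : Fin m → ℝ) (i : Fin m) : MeasurableSet (K c i) := by
  have : K c i = ⋂ j, {t : Fin m → ℝ | c j * t i ≤ t j} := by
    ext t; simp [K]
  rw [this]
  exact MeasurableSet.iInter fun j =>
    measurableSet_le (measurable_const.mul (measurable_pi_apply i)) (measurable_pi_apply j)

/-- Key computation: the probability that coordinate `i` "wins". -/
lemma pim_K {m : ℕ} (c : Fin (m + 1) → ℝ) (hc : ∀ j, 0 < c j) (i : Fin (m + 1))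
    (hci : c i = 1) :
    pim (m + 1) (K c i) = ENNReal.ofReal (∑ j, c j)⁻¹ := by
  classical
  set e := MeasurableEquiv.piFinSuccAbove (fun _ : Fin (m + 1) => ℝ) i with he
  have hmp := measurePreserving_piFinSuccAbove (fun _ : Fin (m + 1) => em) i
  set S : ℝ := ∑ j : Fin m, c (i.succAbove j) with hS
  have hS0 : 0 ≤ S := Finset.sum_nonneg fun j _ => (hc _).le
  have hsum : ∑ j, c j = 1 + S := by
    rw [Fin.sum_univ_succAbove c i, hci]
  -- the preimage of K under e.symm
  set B : Set (ℝ × (Fin m → ℝ)) := {p | ∀ j, c (i.succAbove j) * p.1 ≤ p.2 j} with hB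
  have hBmeas : MeasurableSet B := by
    have : B = ⋂ j, {p : ℝ × (Fin m → ℝ) | c (i.succAbove j) * p.1 ≤ p.2 j} := by
      ext p; simp [hB]
    rw [this]
    exact MeasurableSet.iInter fun j =>
      measurableSet_le (measurable_const.mul measurable_fst)
        ((measurable_pi_apply j).comp measurable_snd)
  have hpre : e ⁻¹' B = K c i := by
    ext t
    simp only [Set.mem_preimage, hB, Set.mem_setOf_eq, K, he,
      MeasurableEquiv.piFinSuccAbove_apply]
    constructor
    · intro h j
      rcases eq_or_ne j i with rfl | hne
      · rw [hci, one_mul]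
      · obtain ⟨k, rfl⟩ := Fin.exists_succAbove_eq hne
        exact h k
    · intro h j
      exact h _
  have hmain : pim (m + 1) (K c i) =
      (em.prod (Measure.pi fun _ : Fin m => em)) B := by
    rw [← hpre]
    exact hmp.measure_preimage hBmeas.nullMeasurableSet
  rw [hmain, Measure.prod_apply hBmeas]
  have hslice : ∀ a : ℝ, 0 ≤ a →
      (Measure.pi fun _ : Fin m => em) (Prod.mk a ⁻¹' B) = ENNReal.ofReal (exp (-(S * a))) := by
    intro a ha
    have : Prod.mk a ⁻¹' B = Set.pi Set.univ fun j : Fin m => Ici (c (i.succAbove j) * a) := by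
      ext w; simp [hB, Set.mem_univ_pi, Pi.le_def]
    rw [this, Measure.pi_pi]
    have : ∀ j : Fin m, em (Ici (c (i.succAbove j) * a)) =
        ENNReal.ofReal (exp (-(c (i.succAbove j) * a))) := fun j =>
      em_Ici (mul_nonneg (hc _).le ha)
    rw [Finset.prod_congr rfl fun j _ => this j,
      ← ENNReal.ofReal_prod_of_nonneg fun j _ => (exp_nonneg _), ← Real.exp_sum]
    congr 2
    rw [hS, Finset.sum_mul, ← Finset.sum_neg_distrib]
  have h1 : ∫⁻ a, (Measure.pi fun _ : Fin m => em) (Prod.mk a ⁻¹' B) ∂em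
      = ∫⁻ a, ENNReal.ofReal (exp (-(S * a))) ∂em :=
    lintegral_congr_ae (em_ae_nonneg.mono fun a ha => hslice a ha)
  have hgmeas : Measurable fun a : ℝ => ENNReal.ofReal (exp (-(S * a))) := by
    apply Measurable.ennreal_ofReal
    fun_prop
  have hpdfmeas : Measurable (exponentialPDF 1) :=
    (measurable_exponentialPDFReal 1).ennreal_ofReal
  have h2 : ∫⁻ a, ENNReal.ofReal (exp (-(S * a))) ∂em
      = ∫⁻ a, exponentialPDF 1 a * ENNReal.ofReal (exp (-(S * a))) ∂volume := by
    rw [em_def, lintegral_withDensity_eq_lintegral_mul _ hpdfmeas hgmeas]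
    rfl
  have hpt : ∀ a : ℝ, exponentialPDF 1 a * ENNReal.ofReal (exp (-(S * a)))
      = ENNReal.ofReal (1 + S)⁻¹ * exponentialPDF (1 + S) a := by
    intro a
    rcases le_or_gt 0 a with ha | ha
    · rw [exponentialPDF_of_nonneg ha, exponentialPDF_of_nonneg ha,
        ← ENNReal.ofReal_mul (by positivity), ← ENNReal.ofReal_mul (by positivity)]
      congr 1
      rw [one_mul, ← Real.exp_add, ← mul_assoc, inv_mul_cancel₀ (by positivity), one_mul]
      congr 1
      ring
    · rw [exponentialPDF_of_neg ha, exponentialPDF_of_neg ha]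
      simp
  have hm : Measurable (exponentialPDF (1 + S)) :=
    (measurable_exponentialPDFReal _).ennreal_ofReal
  rw [h1, h2, lintegral_congr hpt, lintegral_const_mul _ hm,
    lintegral_exponentialPDF_eq_one (by positivity), mul_one, hsum]

/-- Ties are null: the set where `t k = r * t i` has measure zero. -/
lemma pim_tie {m : ℕ} {i k : Fin (m + 1)} (hik : i ≠ k) (r : ℝ) :
    pim (m + 1) {t | t k = r * t i} = 0 := by
  classical
  set e := MeasurableEquiv.piFinSuccAbove (fun _ : Fin (m + 1) => ℝ) k with he
  have hmp := measurePreserving_piFinSuccAbove (fun _ : Fin (m + 1) => em) k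
  obtain ⟨j0, hj0⟩ := Fin.exists_succAbove_eq hik
  set B : Set (ℝ × (Fin m → ℝ)) := {p | p.1 = r * p.2 j0} with hB
  have hBmeas : MeasurableSet B :=
    measurableSet_eq_fun measurable_fst (measurable_const.mul ((measurable_pi_apply j0).comp measurable_snd))
  have hpre : e ⁻¹' B = {t | t k = r * t i} := by
    ext t
    have h2 : t k = r * t (k.succAbove j0) ↔ t k = r * t i := by rw [hj0]
    exact h2
  have hmain : pim (m + 1) {t | t k = r * t i} =
      (em.prod (Measure.pi fun _ : Fin m => em)) B := by
    rw [← hpre]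
    exact hmp.measure_preimage hBmeas.nullMeasurableSet
  rw [hmain, Measure.prod_apply_symm hBmeas]
  have : ∀ w : Fin m → ℝ, em ((fun a => (a, w)) ⁻¹' B) = 0 := by
    intro w
    have : (fun a : ℝ => (a, w)) ⁻¹' B = {r * w j0} := by
      ext a; simp [hB]
    rw [this]
    exact em_null volume_singleton
  simp only [this, lintegral_zero]

/-- The "i wins for vector x" set. -/
noncomputable def W {m : ℕ} (x : Fin m → ℝ) (i : Fin m) : Set (Fin m → ℝ) :=
  K (fun j => x j / x i) i

lemma measurableSet_W {m : ℕ} (x : Fin m → ℝ) (i : Fin m) : MeasurableSet (W x i) :=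
  measurableSet_K _ _

/-- Union of all W's is everything. -/
lemma iUnion_W {m : ℕ} (x : Fin (m + 1) → ℝ) (hx : ∀ i, 0 < x i) :
    (⋃ i, W x i) = Set.univ := by
  ext t
  simp only [Set.mem_iUnion, Set.mem_univ, iff_true]
  obtain ⟨i, _, hi⟩ := Finset.exists_min_image Finset.univ (fun j => t j / x j)
    ⟨0, Finset.mem_univ 0⟩
  refine ⟨i, fun j => ?_⟩
  have := hi j (Finset.mem_univ j)
  rw [div_le_div_iff₀ (hx i) (hx j)] at this
  rw [div_mul_eq_mul_div, div_le_iff₀ (hx i)]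
  linarith [this]

/-- Tie set for a vector. -/
lemma W_inter_W_null {m : ℕ} (x : Fin (m + 1) → ℝ) (hx : ∀ i, 0 < x i) {i k : Fin (m + 1)}
    (hik : i ≠ k) : pim (m + 1) (W x i ∩ W x k) = 0 := by
  have hsub : W x i ∩ W x k ⊆ {t | t k = (x k / x i) * t i} := by
    rintro t ⟨h1, h2⟩
    have ha := h1 k
    have hb := h2 i
    simp only [mem_setOf_eq]
    have hxi := hx i
    have hxk := hx k
    have h1' : x k / x i * t i ≤ t k := ha
    have h2' : x i / x k * t k ≤ t i := hb
    have : t k ≤ x k / x i * t i := by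
      rw [div_mul_eq_mul_div, le_div_iff₀ hxi]
      rw [div_mul_eq_mul_div, div_le_iff₀ hxk] at h2'
      linarith
    linarith
  exact measure_mono_null hsub (pim_tie hik _)

/-- The agreement set for a pair of vectors. -/
noncomputable def D {m : ℕ} (x y : Fin m → ℝ) : Set (Fin m → ℝ) := ⋃ i, W x i ∩ W y i

lemma measurableSet_D {m : ℕ} (x y : Fin m → ℝ) : MeasurableSet (D x y) :=
  MeasurableSet.iUnion fun i => (measurableSet_W x i).inter (measurableSet_W y i)

/-- Measure of the pairwise win set. -/
lemma pim_W_inter {m : ℕ} (x y : Fin (m + 1) → ℝ) (hx : ∀ i, 0 < x i) (hy : ∀ i, 0 < y i)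
    (i : Fin (m + 1)) :
    pim (m + 1) (W x i ∩ W y i)
      = ENNReal.ofReal (∑ j, max (x j / x i) (y j / y i))⁻¹ := by
  set c : Fin (m + 1) → ℝ := fun j => max (x j / x i) (y j / y i) with hc
  have hcpos : ∀ j, 0 < c j := fun j => lt_max_of_lt_left (div_pos (hx j) (hx i))
  have hci : c i = 1 := by
    simp [hc, div_self (hx i).ne', div_self (hy i).ne']
  -- a.e. equality with K c i
  have hN : pim (m + 1) {t : Fin (m + 1) → ℝ | t i < 0} = 0 := by
    have : {t : Fin (m + 1) → ℝ | t i < 0}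
        = Set.pi Set.univ (fun j => if j = i then Iio 0 else Set.univ) := by
      ext t
      simp only [Set.mem_univ_pi, mem_setOf_eq]
      constructor
      · intro h j
        by_cases hj : j = i <;> simp [hj, h]
      · intro h
        have := h i
        simpa using this
    rw [this, pim, Measure.pi_pi]
    refine Finset.prod_eq_zero (Finset.mem_univ i) ?_
    rw [if_pos (rfl : i = i), em_Iio]
    simp
  have hKeq : pim (m + 1) (W x i ∩ W y i) = pim (m + 1) (K c i) := by
    have hset : (W x i ∩ W y i) \ {t | t i < 0} = K c i \ {t | t i < 0} := by
      ext t
      simp only [Set.mem_diff, mem_setOf_eq, not_lt, Set.mem_inter_iff, W, K]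
      constructor
      · rintro ⟨⟨h1, h2⟩, hti⟩
        refine ⟨fun j => ?_, hti⟩
        rw [hc, max_mul_of_nonneg _ _ hti]
        exact max_le (h1 j) (h2 j)
      · rintro ⟨h, hti⟩
        refine ⟨⟨fun j => ?_, fun j => ?_⟩, hti⟩
        · exact le_trans (mul_le_mul_of_nonneg_right (le_max_left _ _) hti) (h j)
        · exact le_trans (mul_le_mul_of_nonneg_right (le_max_right _ _) hti) (h j)
    calc pim (m + 1) (W x i ∩ W y i) = pim (m + 1) ((W x i ∩ W y i) \ {t | t i < 0}) :=
          (measure_diff_null hN).symm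
      _ = pim (m + 1) (K c i \ {t | t i < 0}) := by rw [hset]
      _ = pim (m + 1) (K c i) := measure_diff_null hN
  rw [hKeq, pim_K c hcpos i hci]

lemma term_nonneg {m : ℕ} (x y : Fin m → ℝ) (hx : ∀ i, 0 < x i) (i : Fin m) :
    0 ≤ (∑ j, max (x j / x i) (y j / y i))⁻¹ :=
  inv_nonneg.2 <| Finset.sum_nonneg fun j _ =>
    le_trans (div_nonneg (hx j).le (hx i).le) (le_max_left _ _)

lemma JP_nonneg {m : ℕ} (x y : Fin m → ℝ) (hx : ∀ i, 0 < x i) : 0 ≤ JP x y := by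
  rw [JP]
  exact Finset.sum_nonneg fun i _ => term_nonneg x y hx i

/-- JP equals the measure of the agreement set. -/
lemma pim_D {m : ℕ} (x y : Fin (m + 1) → ℝ) (hx : ∀ i, 0 < x i) (hy : ∀ i, 0 < y i) :
    pim (m + 1) (D x y) = ENNReal.ofReal (JP x y) := by
  classical
  have hJP : JP x y = ∑ i, (∑ j, max (x j / x i) (y j / y i))⁻¹ := by
    rw [JP]
    congr 1
    exact Finset.filter_true_of_mem fun i _ => ⟨hx i, hy i⟩
  have hdisj : Pairwise (Function.onFun (AEDisjoint (pim (m + 1))) fun i => W x i ∩ W y i) := by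
    intro i k hik
    refine measure_mono_null ?_ (W_inter_W_null x hx hik)
    intro t ⟨⟨h1, _⟩, ⟨h2, _⟩⟩
    exact ⟨h1, h2⟩
  have hD : D x y = ⋃ i, W x i ∩ W y i := rfl
  rw [hD, measure_iUnion₀ hdisj fun i =>
    ((measurableSet_W x i).inter (measurableSet_W y i)).nullMeasurableSet,
    tsum_fintype]
  rw [hJP, ENNReal.ofReal_sum_of_nonneg fun i _ => term_nonneg x y hx i]
  exact Finset.sum_congr rfl fun i _ => pim_W_inter x y hx hy i

lemma JP_le_one {m : ℕ} (x y : Fin (m + 1) → ℝ) (hx : ∀ i, 0 < x i) (hy : ∀ i, 0 < y i) :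
    JP x y ≤ 1 := by
  have h := pim_D x y hx hy
  have := measure_mono (μ := pim (m + 1)) (Set.subset_univ (D x y))
  rw [h, measure_univ] at this
  have := ENNReal.toReal_mono (by simp) this
  rwa [ENNReal.toReal_ofReal (JP_nonneg x y hx), ENNReal.toReal_one] at this

/-- complement measure -/
lemma pim_D_compl {m : ℕ} (x y : Fin (m + 1) → ℝ) (hx : ∀ i, 0 < x i) (hy : ∀ i, 0 < y i) :
    (pim (m + 1) (D x y)ᶜ).toReal = 1 - JP x y := by
  rw [measure_compl (measurableSet_D x y) (measure_ne_top _ _), measure_univ,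
    pim_D x y hx hy]
  rw [ENNReal.toReal_sub_of_le (by
      simpa [pim_D x y hx hy] using
        measure_mono (μ := pim (m + 1)) (Set.subset_univ (D x y))) (by simp)]
  rw [ENNReal.toReal_one, ENNReal.toReal_ofReal (JP_nonneg x y hx)]

end JPAux

open JPAux MeasureTheory in
/-- `1 - J_P` is a metric on full-support probability distributions on a finite set:
symmetric, vanishing exactly at equality, and satisfying the triangle inequality. -/
theorem one_sub_JP_is_metric {n : ℕ} (x y z : Fin n → ℝ)
    (hx : ∀ i, 0 < x i) (hy : ∀ i, 0 < y i) (hz : ∀ i, 0 < z i)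
    (hxs : ∑ i, x i = 1) (hys : ∑ i, y i = 1) (hzs : ∑ i, z i = 1) :
    (1 - JP x y = 1 - JP y x) ∧
    (1 - JP x y = 0 ↔ x = y) ∧
    (1 - JP x y ≤ (1 - JP x z) + (1 - JP z y)) := by
  classical
  -- n must be positive
  obtain ⟨m, rfl⟩ : ∃ m, n = m + 1 := by
    cases n with
    | zero => simp at hxs
    | succ m => exact ⟨m, rfl⟩
  refine ⟨?_, ⟨?_, ?_⟩, ?_⟩
  · -- symmetry
    have : JP x y = JP y x := by
      rw [JP, JP]
      refine Finset.sum_congr (by ext i; simp [and_comm]) fun i _ => ?_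
      congr 1
      exact Finset.sum_congr rfl fun j _ => max_comm _ _
    rw [this]
  · -- 1 - JP = 0 → x = y
    intro h
    have hJ : JP x y = 1 := by linarith
    have hterm : ∀ i, (∑ j, max (x j / x i) (y j / y i))⁻¹ ≤ min (x i) (y i) := by
      intro i
      have hxsum : ∑ j, x j / x i = (x i)⁻¹ := by
        rw [← Finset.sum_div, hxs, one_div]
      have hysum : ∑ j, y j / y i = (y i)⁻¹ := by
        rw [← Finset.sum_div, hys, one_div]
      have hx' : (∑ j, max (x j / x i) (y j / y i))⁻¹ ≤ x i := by
        have h1 : (∑ j, max (x j / x i) (y j / y i))⁻¹ ≤ (∑ j, x j / x i)⁻¹ :=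
          inv_anti₀ (by rw [hxsum]; exact inv_pos.2 (hx i))
            (Finset.sum_le_sum fun j _ => le_max_left _ _)
        rwa [hxsum, inv_inv] at h1
      have hy' : (∑ j, max (x j / x i) (y j / y i))⁻¹ ≤ y i := by
        have h1 : (∑ j, max (x j / x i) (y j / y i))⁻¹ ≤ (∑ j, y j / y i)⁻¹ :=
          inv_anti₀ (by rw [hysum]; exact inv_pos.2 (hy i))
            (Finset.sum_le_sum fun j _ => le_max_right _ _)
        rwa [hysum, inv_inv] at h1
      exact le_min hx' hy'
    have hJP : JP x y = ∑ i, (∑ j, max (x j / x i) (y j / y i))⁻¹ := by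
      rw [JP]
      congr 1
      exact Finset.filter_true_of_mem fun i _ => ⟨hx i, hy i⟩
    have hxz : ∑ i, (x i - (∑ j, max (x j / x i) (y j / y i))⁻¹) = 0 := by
      rw [Finset.sum_sub_distrib, hxs, ← hJP, hJ, sub_self]
    have hyz : ∑ i, (y i - (∑ j, max (x j / x i) (y j / y i))⁻¹) = 0 := by
      rw [Finset.sum_sub_distrib, hys, ← hJP, hJ, sub_self]
    have hxe : ∀ i ∈ Finset.univ, x i - (∑ j, max (x j / x i) (y j / y i))⁻¹ = 0 := by
      rw [← Finset.sum_eq_zero_iff_of_nonneg fun i _ => by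
        have := (hterm i).trans (min_le_left _ _); linarith]
      exact hxz
    have hye : ∀ i ∈ Finset.univ, y i - (∑ j, max (x j / x i) (y j / y i))⁻¹ = 0 := by
      rw [← Finset.sum_eq_zero_iff_of_nonneg fun i _ => by
        have := (hterm i).trans (min_le_right _ _); linarith]
      exact hyz
    funext i
    have h1 := hxe i (Finset.mem_univ i)
    have h2 := hye i (Finset.mem_univ i)
    linarith
  · -- x = y → 1 - JP = 0
    rintro rfl
    have : JP x x = 1 := by
      rw [JP]
      rw [Finset.filter_true_of_mem fun i _ => ⟨hx i, hx i⟩]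
      rw [← hxs]
      refine Finset.sum_congr rfl fun i _ => ?_
      simp only [max_self]
      rw [← Finset.sum_div, hxs]
      simp
    rw [this, sub_self]
  · -- triangle inequality
    have hxy := pim_D_compl x y hx hy
    have hxz := pim_D_compl x z hx hz
    have hzy := pim_D_compl z y hz hy
    -- tie set of z
    set T : Set (Fin (m + 1) → ℝ) := ⋃ (i) (k) (_ : i ≠ k), W z i ∩ W z k with hT
    have hTnull : pim (m + 1) T = 0 := by
      rw [hT]
      refine measure_iUnion_null fun i => measure_iUnion_null fun k => measure_iUnion_null fun hik => ?_
      exact W_inter_W_null z hz hik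
    have hsub : (D x y)ᶜ ⊆ (D x z)ᶜ ∪ (D z y)ᶜ ∪ T := by
      intro t ht
      by_contra hcon
      simp only [Set.mem_union, not_or] at hcon
      obtain ⟨⟨h1, h2⟩, h3⟩ := hcon
      rw [Set.notMem_compl_iff] at h1 h2
      obtain ⟨_, ⟨⟨i, rfl⟩, hi⟩⟩ := h1
      obtain ⟨_, ⟨⟨k, rfl⟩, hk⟩⟩ := h2
      rcases eq_or_ne i k with rfl | hik
      · exact ht ⟨_, ⟨⟨i, rfl⟩, ⟨hi.1, hk.2⟩⟩⟩
      · exact h3 (Set.mem_iUnion.2 ⟨i, Set.mem_iUnion.2 ⟨k, Set.mem_iUnion.2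
          ⟨hik, ⟨hi.2, hk.1⟩⟩⟩⟩)
    have hle : pim (m + 1) (D x y)ᶜ ≤ pim (m + 1) (D x z)ᶜ + pim (m + 1) (D z y)ᶜ := by
      calc pim (m + 1) (D x y)ᶜ ≤ pim (m + 1) ((D x z)ᶜ ∪ (D z y)ᶜ ∪ T) := measure_mono hsub
        _ ≤ pim (m + 1) ((D x z)ᶜ ∪ (D z y)ᶜ) + pim (m + 1) T := measure_union_le _ _
        _ = pim (m + 1) ((D x z)ᶜ ∪ (D z y)ᶜ) := by rw [hTnull, add_zero]
        _ ≤ _ := measure_union_le _ _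
    have := ENNReal.toReal_mono (by
      exact ENNReal.add_ne_top.2 ⟨measure_ne_top _ _, measure_ne_top _ _⟩) hle
    rw [ENNReal.toReal_add (measure_ne_top _ _) (measure_ne_top _ _)] at this
    rw [hxy, hxz, hzy] at this
    exact this
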